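/- Let A = {a_n}, B = {b_n} be two sequences of positive integers with a_n ≤ b_n for all n, and ψ: ℕ → (0,1). Define S_{A,B}(ψ) = { x ∈ [0,1] : max{‖a_n x‖, ‖b_n x‖} < ψ(n) for infinitely many n ∈ ℕ }. Then the Hausdorff dimension of S_{A,B}(ψ) is at most κ, where κ = inf{ s > 0 : Σ_{n=1}^∞ (gcd(a_n,b_n) + b_n ψ(n)) · (ψ(n)/b_n)^s < ∞ }. -/

import Mathlib

open MeasureTheory Filter Set
open scoped ENNReal NNReal Topology

/-- Distance from a real number to the nearest integer. -/
noncomputable def nint (x : ℝ) : ℝ := |x - (round x : ℝ)|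

lemma nint_add_int (x : ℝ) (m : ℤ) : nint (x + m) = nint x := by
  unfold nint; rw [round_add_intCast]; push_cast; ring_nf

lemma nint_ge (y : ℝ) (h0 : 0 ≤ y) (h1 : y < 1) : min y (1 - y) ≤ nint y := by
  unfold nint
  rcases le_or_gt (round y) 0 with h | h
  · have h' : (round y : ℝ) ≤ 0 := by exact_mod_cast h
    have : |y - (round y : ℝ)| ≥ y := by rw [abs_of_nonneg (by linarith)]; linarith
    exact le_trans (min_le_left _ _) this
  · have h' : (1 : ℝ) ≤ (round y : ℝ) := by exact_mod_cast h
    have : |y - (round y : ℝ)| ≥ 1 - y := by rw [abs_of_nonpos (by linarith)]; linarith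
    exact le_trans (min_le_right _ _) this

lemma count_lemma (a b : ℕ) (ha : 0 < a) (hb : 0 < b) (ψ : ℝ) (hψ0 : 0 < ψ) :
    (((Finset.range (b+1)).filter fun k : ℕ => nint ((a : ℝ) * (k : ℝ) / (b : ℝ)) < 2 * ψ).card : ℝ)
      ≤ 4 * ((Nat.gcd a b : ℝ) + (b : ℝ) * ψ) := by
  set g := Nat.gcd a b with hg
  have hg0 : 0 < g := Nat.gcd_pos_of_pos_left _ ha
  have hgb : g ∣ b := Nat.gcd_dvd_right a b
  have hga : g ∣ a := Nat.gcd_dvd_left a b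
  set b' := b / g with hb'
  have hbb' : b = g * b' := (Nat.mul_div_cancel' hgb).symm
  have hb'0 : 0 < b' := Nat.div_pos (Nat.le_of_dvd hb hgb) hg0
  have hbR : (b : ℝ) = (g : ℝ) * (b' : ℝ) := by exact_mod_cast congrArg (Nat.cast : ℕ → ℝ) hbb'
  set K := (Finset.range (b+1)).filter
      (fun k : ℕ => nint ((a : ℝ) * (k : ℝ) / (b : ℝ)) < 2 * ψ) with hK
  set K₀ := K.filter (fun k : ℕ => k < b) with hK₀
  -- Step A
  have hA : K.card ≤ K₀.card + 1 := by
    have hsub : K ⊆ insert b K₀ := by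
      intro k hk
      have hkb : k < b + 1 := Finset.mem_range.1 (Finset.mem_filter.1 hk).1
      rcases lt_or_eq_of_le (Nat.lt_succ_iff.1 hkb) with h | h
      · exact Finset.mem_insert_of_mem (Finset.mem_filter.2 ⟨hk, h⟩)
      · exact h ▸ Finset.mem_insert_self _ _
    calc K.card ≤ (insert b K₀).card := Finset.card_le_card hsub
      _ ≤ K₀.card + 1 := Finset.card_insert_le _ _
  -- Step B
  have hB : K₀.card ≤ g * (K₀.image (fun k => a * k % b)).card := by
    apply Finset.card_le_mul_card_image
    intro r _
    have hcard := Finset.card_le_card_of_injOn (fun k => k / b')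
      (t := Finset.range g) (s := K₀.filter (fun k => a * k % b = r))
      (by
        intro k hk
        have hkb : k < b := (Finset.mem_filter.1 (Finset.mem_filter.1 hk).1).2
        exact Finset.mem_range.2 ((Nat.div_lt_iff_lt_mul hb'0).2 (by omega)))
      (by
        intro k hk k' hk' hkk'
        simp only [Finset.coe_filter, Set.mem_setOf_eq] at hk hk'
        have h1 : a * k % b = a * k' % b := hk.2.trans hk'.2.symm
        have h2 : k ≡ k' [MOD b / Nat.gcd b a] := Nat.ModEq.cancel_left_div_gcd hb h1
        rw [Nat.gcd_comm] at h2
        have h3 : k % b' = k' % b' := h2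
        have hkk'' : k / b' = k' / b' := hkk'
        have e1 := Nat.div_add_mod k b'
        have e2 := Nat.div_add_mod k' b'
        rw [hkk'', h3] at e1
        exact e1.symm.trans e2)
    simpa using hcard
  -- Step C : image ⊆ R
  set R := (Finset.range b).filter
      (fun r : ℕ => g ∣ r ∧ ((r:ℝ) < 2*ψ*(b:ℝ) ∨ (b:ℝ) - (r:ℝ) < 2*ψ*(b:ℝ))) with hR
  have hC : K₀.image (fun k => a * k % b) ⊆ R := by
    intro r hr
    obtain ⟨k, hk, rfl⟩ := Finset.mem_image.1 hr
    have hkP : nint ((a : ℝ) * (k:ℝ) / (b:ℝ)) < 2 * ψ :=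
      (Finset.mem_filter.1 (Finset.mem_filter.1 hk).1).2
    have hrb : a * k % b < b := Nat.mod_lt _ hb
    have hgr : g ∣ a * k % b := (Nat.dvd_mod_iff hgb).2 (hga.mul_right k)
    refine Finset.mem_filter.2 ⟨Finset.mem_range.2 hrb, hgr, ?_⟩
    have hdm : b * (a * k / b) + a * k % b = a * k := Nat.div_add_mod _ _
    generalize hqdef : a * k / b = q at hdm
    generalize hrdef : a * k % b = r at hdm hrb hkP ⊢
    have hbne : (b:ℝ) ≠ 0 := by positivity
    have hdmR : (b:ℝ) * (q:ℝ) + (r:ℝ) = (a:ℝ) * (k:ℝ) := by exact_mod_cast hdm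
    have heq : (a : ℝ) * (k:ℝ) / (b:ℝ) = (r : ℝ) / (b:ℝ) + ((q : ℤ) : ℝ) := by
      field_simp
      push_cast
      linarith
    rw [heq, nint_add_int] at hkP
    have h0 : (0:ℝ) ≤ (r:ℝ)/(b:ℝ) := by positivity
    have h1 : (r:ℝ)/(b:ℝ) < 1 := by
      rw [div_lt_one (by positivity)]; exact_mod_cast hrb
    have hmin := nint_ge _ h0 h1
    have hbpos : (0:ℝ) < (b:ℝ) := by positivity
    rcases min_le_iff.1 hmin with h | h
    · left
      have h2 : (r:ℝ)/(b:ℝ) < 2*ψ := lt_of_le_of_lt h hkP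
      calc (r:ℝ) = (r:ℝ)/(b:ℝ) * (b:ℝ) := by field_simp
        _ < 2*ψ*(b:ℝ) := mul_lt_mul_of_pos_right h2 hbpos
    · right
      have h2 : 1 - (r:ℝ)/(b:ℝ) < 2*ψ := lt_of_le_of_lt h hkP
      have h3 : (1 - (r:ℝ)/(b:ℝ)) * (b:ℝ) < 2*ψ*(b:ℝ) := mul_lt_mul_of_pos_right h2 hbpos
      calc (b:ℝ) - (r:ℝ) = (1 - (r:ℝ)/(b:ℝ)) * (b:ℝ) := by field_simp
        _ < 2*ψ*(b:ℝ) := h3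
  -- Step D : R.card ≤ M.card
  set M := (Finset.range b').filter
      (fun m : ℕ => (m:ℝ) < 2*ψ*(b':ℝ) ∨ (b':ℝ) - (m:ℝ) < 2*ψ*(b':ℝ)) with hM
  have hD : R.card ≤ M.card := by
    apply Finset.card_le_card_of_injOn (fun r => r / g)
    · intro r hr
      obtain ⟨hrb, hgr, hcond⟩ := Finset.mem_filter.1 hr
      have hrb : r < b := Finset.mem_range.1 hrb
      obtain ⟨m, rfl⟩ := hgr
      have hmr : g * m / g = m := Nat.mul_div_cancel_left m hg0
      have hmb' : m < b' := by
        by_contra h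
        push_neg at h
        exact absurd hrb (by rw [hbb']; exact not_lt.2 (Nat.mul_le_mul_left g h))
      show g * m / g ∈ M
      rw [hmr]
      refine Finset.mem_filter.2 ⟨Finset.mem_range.2 hmb', ?_⟩
      have hgR : (0:ℝ) < (g:ℝ) := by positivity
      have hc : ((g*m : ℕ):ℝ) = (g:ℝ)*(m:ℝ) := by push_cast; ring
      rcases hcond with h | h
      · left
        rw [hc, hbR] at h
        nlinarith
      · right
        rw [hc, hbR] at h
        nlinarith
    · intro r hr r' hr' hrr'
      obtain ⟨-, hgr, -⟩ := Finset.mem_filter.1 (Finset.mem_coe.1 hr)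
      obtain ⟨-, hgr', -⟩ := Finset.mem_filter.1 (Finset.mem_coe.1 hr')
      obtain ⟨m, rfl⟩ := hgr
      obtain ⟨m', rfl⟩ := hgr'
      have hh : g * m / g = g * m' / g := hrr'
      rw [Nat.mul_div_cancel_left m hg0, Nat.mul_div_cancel_left m' hg0] at hh
      rw [hh]
  -- Step E : M.card bound
  have hE : (M.card : ℝ) ≤ 2 * (2*ψ*(b':ℝ) + 1) := by
    set t := 2*ψ*(b':ℝ) with ht
    have ht0 : 0 ≤ t := by positivity
    set M1 := (Finset.range b').filter (fun m : ℕ => (m:ℝ) < t) with hM1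
    set M2 := (Finset.range b').filter (fun m : ℕ => (b':ℝ) - (m:ℝ) < t) with hM2
    have hMsub : M ⊆ M1 ∪ M2 := by
      intro m hm
      obtain ⟨h1, h2⟩ := Finset.mem_filter.1 hm
      rcases h2 with h | h
      · exact Finset.mem_union_left _ (Finset.mem_filter.2 ⟨h1, h⟩)
      · exact Finset.mem_union_right _ (Finset.mem_filter.2 ⟨h1, h⟩)
    have hM1card : (M1.card : ℝ) ≤ t + 1 := by
      have hsub : M1 ⊆ Finset.range (⌊t⌋₊ + 1) := by
        intro m hm
        have h := (Finset.mem_filter.1 hm).2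
        exact Finset.mem_range.2 (Nat.lt_succ_of_le (Nat.le_floor h.le))
      calc (M1.card : ℝ) ≤ ((Finset.range (⌊t⌋₊ + 1)).card : ℝ) := by
            exact_mod_cast Finset.card_le_card hsub
        _ = ((⌊t⌋₊ + 1 : ℕ) : ℝ) := by rw [Finset.card_range]
        _ ≤ t + 1 := by push_cast; linarith [Nat.floor_le ht0]
    have hM2card : (M2.card : ℝ) ≤ t + 1 := by
      have hmaps : ∀ m ∈ M2, (b' - 1 - m) ∈ Finset.range (⌊t⌋₊ + 1) := by
        intro m hm
        obtain ⟨h1, h2⟩ := Finset.mem_filter.1 hm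
        have hmb : m < b' := Finset.mem_range.1 h1
        have hcast : ((b' - 1 - m : ℕ) : ℝ) ≤ t := by
          have he : ((b' - 1 - m : ℕ) : ℝ) = (b':ℝ) - 1 - (m:ℝ) := by
            have h1' : m ≤ b' - 1 := by omega
            have h2' : 1 ≤ b' := by omega
            push_cast [Nat.cast_sub h1', Nat.cast_sub h2']
            ring
          rw [he]; linarith
        exact Finset.mem_range.2 (Nat.lt_succ_of_le (Nat.le_floor hcast))
      have hcard : M2.card ≤ (Finset.range (⌊t⌋₊ + 1)).card :=
        Finset.card_le_card_of_injOn _ hmaps (by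
          intro m hm m' hm' h
          have h1 : m < b' := Finset.mem_range.1 (Finset.mem_filter.1 (Finset.mem_coe.1 hm)).1
          have h2 : m' < b' := Finset.mem_range.1 (Finset.mem_filter.1 (Finset.mem_coe.1 hm')).1
          omega)
      calc (M2.card : ℝ) ≤ ((Finset.range (⌊t⌋₊ + 1)).card : ℝ) := by
            exact_mod_cast hcard
        _ = ((⌊t⌋₊ + 1 : ℕ) : ℝ) := by rw [Finset.card_range]
        _ ≤ t + 1 := by push_cast; linarith [Nat.floor_le ht0]
    calc (M.card : ℝ) ≤ ((M1 ∪ M2).card : ℝ) := by exact_mod_cast Finset.card_le_card hMsub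
      _ ≤ (M1.card : ℝ) + (M2.card : ℝ) := by exact_mod_cast Finset.card_union_le _ _
      _ ≤ 2 * (t + 1) := by linarith
  -- assemble
  have h1 : (K.card : ℝ) ≤ (K₀.card : ℝ) + 1 := by exact_mod_cast hA
  have h2 : (K₀.card : ℝ) ≤ (g : ℝ) * ((K₀.image (fun k => a * k % b)).card : ℝ) := by
    exact_mod_cast hB
  have h3 : ((K₀.image (fun k => a * k % b)).card : ℝ) ≤ (R.card : ℝ) := by
    exact_mod_cast Finset.card_le_card hC
  have h4 : (R.card : ℝ) ≤ (M.card : ℝ) := by exact_mod_cast hD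
  have hgR : (1:ℝ) ≤ (g:ℝ) := by exact_mod_cast hg0
  have hb'R : (0:ℝ) < (b':ℝ) := by exact_mod_cast hb'0
  nlinarith [hE, hbR, hψ0]

lemma nint_le_add (x y : ℝ) : nint x ≤ nint y + |x - y| := by
  calc nint x ≤ |x - (round y : ℝ)| := round_le x (round y)
  _ ≤ |x - y| + |y - (round y : ℝ)| := by
      have := abs_sub_le x y ((round y : ℝ)); linarith
  _ = nint y + |x - y| := by rw [nint]; ring

lemma cover_lemma (a b : ℕ) (hab : a ≤ b) (hb : 0 < b) (ψ x : ℝ) (hψ : 0 < ψ)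
    (hx0 : 0 ≤ x) (hx1 : x ≤ 1)
    (hna : nint ((a:ℝ) * x) < ψ) (hnb : nint ((b:ℝ) * x) < ψ) :
    ∃ k : ℕ, k < b + 1 ∧ nint ((a:ℝ) * (k:ℝ) / (b:ℝ)) < 2 * ψ ∧
      x ∈ Icc (((k:ℝ) - ψ)/(b:ℝ)) (((k:ℝ) + ψ)/(b:ℝ)) := by
  have hbR : (0:ℝ) < (b:ℝ) := by exact_mod_cast hb
  set y := (b:ℝ) * x with hy
  have hy0 : 0 ≤ y := by positivity
  have hyb : y ≤ (b:ℝ) := by nlinarith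
  set K := round y with hKdef
  have habs : |y - (K:ℝ)| ≤ 1/2 := abs_sub_round y
  have hK0 : 0 ≤ K := by
    by_contra h
    push_neg at h
    have h1 : K ≤ -1 := by omega
    have h2 : (K:ℝ) ≤ -1 := by exact_mod_cast h1
    have h3 := le_abs_self (y - (K:ℝ))
    linarith
  have hKb : K ≤ (b:ℤ) := by
    by_contra h
    push_neg at h
    have h1 : (b:ℤ) + 1 ≤ K := h
    have h2 : (b:ℝ) + 1 ≤ (K:ℝ) := by exact_mod_cast h1
    have h3 := neg_abs_le (y - (K:ℝ))
    linarith
  refine ⟨K.toNat, by omega, ?_, ?_⟩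
  · have hkK : ((K.toNat : ℕ):ℝ) = (K:ℝ) := by exact_mod_cast Int.toNat_of_nonneg hK0
    have hnbk : |y - ((K.toNat:ℕ):ℝ)| < ψ := by rw [hkK]; exact hnb
    have h1 := nint_le_add ((a:ℝ) * (K.toNat:ℕ) / (b:ℝ)) ((a:ℝ) * x)
    have h2 : (a:ℝ) * (K.toNat:ℕ) / (b:ℝ) - (a:ℝ) * x
        = (a:ℝ)/(b:ℝ) * (((K.toNat:ℕ):ℝ) - y) := by
      rw [hy]; field_simp
    have h3 : |(a:ℝ) * (K.toNat:ℕ) / (b:ℝ) - (a:ℝ) * x| ≤ |((K.toNat:ℕ):ℝ) - y| := by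
      rw [h2, abs_mul]
      have hd0 : 0 ≤ (a:ℝ)/(b:ℝ) := by positivity
      have hd1 : (a:ℝ)/(b:ℝ) ≤ 1 := by
        rw [div_le_one hbR]; exact_mod_cast hab
      rw [abs_of_nonneg hd0]
      nlinarith [abs_nonneg (((K.toNat:ℕ):ℝ) - y)]
    rw [abs_sub_comm] at hnbk
    linarith
  · have hkK : ((K.toNat : ℕ):ℝ) = (K:ℝ) := by exact_mod_cast Int.toNat_of_nonneg hK0
    have hnbk : |y - ((K.toNat:ℕ):ℝ)| < ψ := by rw [hkK]; exact hnb
    obtain ⟨hl, hr⟩ := abs_lt.1 hnbk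
    constructor
    · rw [div_le_iff₀ hbR]; nlinarith [hy, hl, hr]
    · rw [le_div_iff₀ hbR]; nlinarith [hy, hl, hr]

theorem stmt13 (a b : ℕ → ℕ) (ha : ∀ n, 0 < a n) (hb : ∀ n, 0 < b n)
    (hab : ∀ n, a n ≤ b n)
    (ψ : ℕ → ℝ) (hψ : ∀ n, ψ n ∈ Ioo (0 : ℝ) 1) :
    dimH {x : ℝ | x ∈ Icc (0 : ℝ) 1 ∧
        ∃ᶠ n in atTop, max (nint ((a n : ℝ) * x)) (nint ((b n : ℝ) * x)) < ψ n} ≤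
      ⨅ (s : ℝ) (_ : 0 < s ∧ Summable (fun n =>
          ((Nat.gcd (a n) (b n) : ℝ) + (b n : ℝ) * ψ n) * (ψ n / (b n : ℝ)) ^ s)),
        ENNReal.ofReal s := by
  refine le_iInf fun s => le_iInf fun hsP => ?_
  obtain ⟨hs0, hsum⟩ := hsP
  set S := {x : ℝ | x ∈ Icc (0 : ℝ) 1 ∧
      ∃ᶠ n in atTop, max (nint ((a n : ℝ) * x)) (nint ((b n : ℝ) * x)) < ψ n} with hS
  have hψ0 : ∀ n, 0 < ψ n := fun n => (hψ n).1
  have hbR : ∀ n, (0:ℝ) < (b n : ℝ) := fun n => by exact_mod_cast hb n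
  have hu0 : ∀ n, 0 < ψ n / (b n : ℝ) := fun n => div_pos (hψ0 n) (hbR n)
  -- terms and their nonnegativity
  set F : ℕ → ℝ≥0∞ := fun n => ENNReal.ofReal
      (((Nat.gcd (a n) (b n) : ℝ) + (b n : ℝ) * ψ n) * (ψ n / (b n : ℝ)) ^ s) with hF
  have hterm_nonneg : ∀ n, 0 ≤ ((Nat.gcd (a n) (b n) : ℝ) + (b n : ℝ) * ψ n)
      * (ψ n / (b n : ℝ)) ^ s := by
    intro n
    apply mul_nonneg
    · have : (0:ℝ) ≤ (Nat.gcd (a n) (b n) : ℝ) := Nat.cast_nonneg _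
      nlinarith [mul_pos (hbR n) (hψ0 n)]
    · exact Real.rpow_nonneg (hu0 n).le s
  have hFsum : ∑' n, F n ≠ ⊤ := by
    rw [← ENNReal.ofReal_tsum_of_nonneg hterm_nonneg hsum]
    exact ENNReal.ofReal_ne_top
  -- ψ/b → 0
  have hus : Tendsto (fun n => (ψ n / (b n : ℝ)) ^ s) atTop (𝓝 0) := by
    apply squeeze_zero (fun n => Real.rpow_nonneg (hu0 n).le s) (fun n => ?_)
      hsum.tendsto_atTop_zero
    have hg1 : (1:ℝ) ≤ (Nat.gcd (a n) (b n) : ℝ) := by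
      exact_mod_cast Nat.gcd_pos_of_pos_left (b n) (ha n)
    nlinarith [Real.rpow_nonneg (hu0 n).le s, mul_pos (hbR n) (hψ0 n)]
  have hu : Tendsto (fun n => ψ n / (b n : ℝ)) atTop (𝓝 0) := by
    have hsne : (1:ℝ)/s ≠ 0 := by positivity
    have hcont : ContinuousAt (fun y : ℝ => y ^ ((1:ℝ)/s)) 0 :=
      Real.continuousAt_rpow_const 0 ((1:ℝ)/s) (Or.inr (by positivity))
    have h2 := hcont.tendsto.comp hus
    rw [Real.zero_rpow hsne] at h2
    have heq : (fun n => ((ψ n / (b n : ℝ)) ^ s) ^ ((1:ℝ)/s)) = fun n => ψ n / (b n : ℝ) := by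
      funext n
      rw [← Real.rpow_mul (hu0 n).le]
      rw [show s * ((1:ℝ)/s) = 1 by field_simp]
      exact Real.rpow_one _
    rw [show ((fun y : ℝ => y ^ ((1:ℝ)/s)) ∘ fun n => (ψ n / (b n : ℝ)) ^ s)
        = fun n => ((ψ n / (b n : ℝ)) ^ s) ^ ((1:ℝ)/s) from rfl, heq] at h2
    exact h2
  -- diameters
  set w : ℕ → ℝ≥0∞ := fun n => ENNReal.ofReal (2 * (ψ n / (b n : ℝ))) with hw
  have hwt : Tendsto w atTop (𝓝 0) := by
    have h0 : Tendsto (fun n => 2 * (ψ n / (b n : ℝ))) atTop (𝓝 0) := by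
      simpa using hu.const_mul 2
    have h := ENNReal.tendsto_ofReal (a := 0) h0
    rw [ENNReal.ofReal_zero] at h; exact h
  set r : ℕ → ℝ≥0∞ := fun N => ⨆ j : ℕ, w (j + N) with hr
  have hrt : Tendsto r atTop (𝓝 0) := by
    rw [ENNReal.tendsto_atTop_zero]
    intro ε hε
    obtain ⟨N, hN⟩ := ENNReal.tendsto_atTop_zero.1 hwt ε hε
    exact ⟨N, fun M hM => iSup_le fun j => hN (j + M) (le_trans hM (Nat.le_add_left M j))⟩
  -- covering sets
  set K : ℕ → Finset ℕ := fun n => (Finset.range (b n + 1)).filter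
      (fun k : ℕ => nint ((a n : ℝ) * (k:ℝ) / (b n : ℝ)) < 2 * ψ n) with hKdef
  set t : ℕ → ℕ × ℕ → Set ℝ := fun N p =>
      if p.2 ∈ K (p.1 + N) then
        Icc (((p.2:ℝ) - ψ (p.1 + N))/(b (p.1 + N) : ℝ)) (((p.2:ℝ) + ψ (p.1 + N))/(b (p.1 + N):ℝ))
      else ∅ with htdef
  have hdiamIcc : ∀ N p, p.2 ∈ K (p.1 + N) →
      EMetric.diam (t N p) = w (p.1 + N) := by
    intro N p hp
    rw [htdef]
    simp only [if_pos hp]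
    rw [show EMetric.diam = Metric.ediam from rfl, Real.ediam_Icc]
    congr 1
    have := hbR (p.1 + N)
    field_simp
    ring
  have hdiam : ∀ N, ∀ p : ℕ × ℕ, EMetric.diam (t N p) ≤ r N := by
    intro N p
    by_cases hp : p.2 ∈ K (p.1 + N)
    · rw [hdiamIcc N p hp]
      exact le_iSup (fun j => w (j + N)) p.1
    · rw [htdef]
      simp [if_neg hp, show EMetric.diam (∅ : Set ℝ) = 0 from Metric.ediam_empty]
  have hcover : ∀ N, S ⊆ ⋃ i, t N i := by
    intro N x hx
    obtain ⟨hxI, hfreq⟩ := hx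
    obtain ⟨n, hnN, hmax⟩ := (frequently_atTop.1 hfreq) N
    have hna : nint ((a n : ℝ) * x) < ψ n := lt_of_le_of_lt (le_max_left _ _) hmax
    have hnb : nint ((b n : ℝ) * x) < ψ n := lt_of_le_of_lt (le_max_right _ _) hmax
    obtain ⟨k, hkb, hkcond, hxIcc⟩ := cover_lemma (a n) (b n) (hab n) (hb n) (ψ n) x
      (hψ0 n) hxI.1 hxI.2 hna hnb
    refine mem_iUnion.2 ⟨(n - N, k), ?_⟩
    have hn' : n - N + N = n := Nat.sub_add_cancel hnN
    have hkK : k ∈ K (n - N + N) := by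
      rw [hn', hKdef]
      exact Finset.mem_filter.2 ⟨Finset.mem_range.2 hkb, hkcond⟩
    rw [htdef]
    simp only [if_pos hkK]
    rw [hn']
    exact hxIcc
  -- main estimate
  have key := MeasureTheory.Measure.hausdorffMeasure_le_liminf_tsum (X := ℝ) s S r hrt t
    (Eventually.of_forall hdiam) (Eventually.of_forall hcover)
  set C : ℝ≥0∞ := ENNReal.ofReal (4 * (2:ℝ) ^ s) with hC
  have hsumbound : ∀ N, (∑' i : ℕ × ℕ, EMetric.diam (t N i) ^ s) ≤ C * ∑' j, F (j + N) := by
    intro N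
    rw [ENNReal.tsum_prod', ← ENNReal.tsum_mul_left]
    apply ENNReal.tsum_le_tsum
    intro j
    have hinner : (∑' k : ℕ, EMetric.diam (t N (j,k)) ^ s)
        = ((K (j + N)).card : ℝ≥0∞) * (w (j + N)) ^ s := by
      calc (∑' k : ℕ, EMetric.diam (t N (j,k)) ^ s)
          = ∑ k ∈ K (j + N), EMetric.diam (t N (j,k)) ^ s := by
            refine tsum_eq_sum (fun k hk => ?_)
            have he : t N (j, k) = ∅ := by rw [htdef]; exact if_neg hk
            rw [he]
            simp [ENNReal.zero_rpow_of_pos hs0, show EMetric.diam (∅ : Set ℝ) = 0 from Metric.ediam_empty]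
        _ = ∑ _k ∈ K (j + N), (w (j + N)) ^ s :=
            Finset.sum_congr rfl (fun k hk => by rw [hdiamIcc N (j, k) hk])
        _ = ((K (j + N)).card : ℝ≥0∞) * (w (j + N)) ^ s := by
            rw [Finset.sum_const, nsmul_eq_mul]
    rw [hinner]
    have hcard : ((K (j + N)).card : ℝ≥0∞)
        ≤ ENNReal.ofReal (4 * ((Nat.gcd (a (j+N)) (b (j+N)) : ℝ) + (b (j+N) : ℝ) * ψ (j+N))) := by
      rw [← ENNReal.ofReal_natCast]
      exact ENNReal.ofReal_le_ofReal
        (count_lemma (a (j+N)) (b (j+N)) (ha _) (hb _) (ψ (j+N)) (hψ0 _))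
    have hpow : (w (j + N)) ^ s = ENNReal.ofReal ((2 * (ψ (j+N) / (b (j+N) : ℝ))) ^ s) :=
      ENNReal.ofReal_rpow_of_pos (by have := hu0 (j+N); linarith)
    calc ((K (j + N)).card : ℝ≥0∞) * (w (j + N)) ^ s
        ≤ ENNReal.ofReal (4 * ((Nat.gcd (a (j+N)) (b (j+N)) : ℝ) + (b (j+N) : ℝ) * ψ (j+N)))
          * ENNReal.ofReal ((2 * (ψ (j+N) / (b (j+N) : ℝ))) ^ s) := by
          rw [hpow]; exact mul_le_mul_left hcard _
      _ = C * F (j + N) := by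
          rw [← ENNReal.ofReal_mul (by
            have h1 : (0:ℝ) ≤ (Nat.gcd (a (j+N)) (b (j+N)) : ℝ) := Nat.cast_nonneg _
            nlinarith [mul_pos (hbR (j+N)) (hψ0 (j+N))]), hC, hF,
            ← ENNReal.ofReal_mul (by positivity)]
          congr 1
          rw [Real.mul_rpow (by norm_num) (hu0 (j+N)).le]
          ring
  have hT : Tendsto (fun N => C * ∑' j, F (j + N)) atTop (𝓝 0) := by
    have h1 := ENNReal.tendsto_sum_nat_add F hFsum
    have h2 := ENNReal.Tendsto.const_mul (a := C) h1 (Or.inr (by rw [hC]; exact ENNReal.ofReal_ne_top))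
    simpa using h2
  have hliminf : liminf (fun N => ∑' i : ℕ × ℕ, EMetric.diam (t N i) ^ s) atTop = 0 := by
    apply le_antisymm _ zero_le
    calc liminf (fun N => ∑' i : ℕ × ℕ, EMetric.diam (t N i) ^ s) atTop
        ≤ liminf (fun N => C * ∑' j, F (j + N)) atTop :=
          liminf_le_liminf (Eventually.of_forall hsumbound)
      _ = 0 := hT.liminf_eq
  have hmu : μH[s] S = 0 := le_antisymm (by rw [← hliminf]; exact key) zero_le
  have hfin : μH[((s.toNNReal : ℝ≥0) : ℝ)] S ≠ ⊤ := by
    rw [Real.coe_toNNReal s hs0.le, hmu]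
    exact ENNReal.zero_ne_top
  have hd := dimH_le_of_hausdorffMeasure_ne_top hfin
  exact hd
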